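/- Let L be a finite first-order language and T a uniformly locally finite class of L-structures. Then for every quantifier-free L-formula φ with free variables among x_1,…,x_k, there exist finitely many quantifier-free L-formulas α_1,…,α_m with free variables among x_1,…,x_k such that: (i) each α_r defines a local-symmetry equivalence class realized in T, i.e., there are M_r ∈ T and v⃗_r ∈ M_r^k such that for every M ∈ T and u⃗ ∈ M^k, M ⊨ α_r(u⃗) if and only if there is a local isomorphism from v⃗_r to u⃗; and (ii) for every M ∈ T and u⃗ ∈ M^k, M ⊨ φ(u⃗) if and only if M ⊨ α_r(u⃗) for some r ∈ {1,…,m}. That is, over T every quantifier-free formula is equivalent to a finite disjunction of formulas each defining a single local-symmetry equivalence class. -/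

import Mathlib

open FirstOrder Language Substructure

universe u v w x

namespace QFH

variable {L : FirstOrder.Language.{u, v}} {M : Type x} {N : Type x} [L.Structure M] [L.Structure N]

theorem realize_qf_embedding (g : M ↪[L] N) {α : Type*} {n : ℕ}
    {ψ : L.BoundedFormula α n} (h : ψ.IsQF) (v : α → M) (xs : Fin n → M) :
    ψ.Realize (⇑g ∘ v) (⇑g ∘ xs) ↔ ψ.Realize v xs := by
  induction h with
  | falsum => rfl
  | of_isAtomic h =>
    cases h with
    | equal t₁ t₂ =>
      simp only [BoundedFormula.realize_bdEqual, ← Sum.comp_elim, HomClass.realize_term]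
      exact g.injective.eq_iff
    | rel R ts =>
      simp only [BoundedFormula.realize_rel, ← Sum.comp_elim, HomClass.realize_term]
      exact StrongHomClass.map_rel g _ _
  | imp _ _ ih1 ih2 => simp only [BoundedFormula.realize_imp, ih1, ih2]

theorem realize_qf_embedding_formula (g : M ↪[L] N) {α : Type*}
    {ψ : L.Formula α} (h : ψ.IsQF) (v : α → M) :
    ψ.Realize (⇑g ∘ v) ↔ ψ.Realize v := by
  have h2 := realize_qf_embedding g h v default
  rwa [Subsingleton.elim (⇑g ∘ (default : Fin 0 → M)) default] at h2

theorem realize_iff_of_equiv {k : ℕ} {ψ : L.Formula (Fin k)} (h : ψ.IsQF)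
    (v : Fin k → M) (u : Fin k → N)
    (β : (closure L (Set.range v)) ≃[L] (closure L (Set.range u)))
    (hβ : ∀ a, (β ⟨v a, subset_closure (Set.mem_range_self a)⟩ : N) = u a) :
    ψ.Realize v ↔ ψ.Realize u := by
  set v' : Fin k → (closure L (Set.range v)) :=
    fun a => ⟨v a, subset_closure (Set.mem_range_self a)⟩ with hv'
  have h1 : ψ.Realize v ↔ ψ.Realize v' := by
    have := realize_qf_embedding_formula ((closure L (Set.range v)).subtype) h v'
    rw [show (⇑(closure L (Set.range v)).subtype ∘ v') = v from funext fun a => rfl] at this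
    exact this
  have h2 : ψ.Realize (⇑β ∘ v') ↔ ψ.Realize v' := StrongHomClass.realize_formula β ψ
  have h3 : ψ.Realize u ↔ ψ.Realize (⇑β ∘ v') := by
    have := realize_qf_embedding_formula ((closure L (Set.range u)).subtype) h (⇑β ∘ v')
    rw [show (⇑(closure L (Set.range u)).subtype ∘ (⇑β ∘ v')) = u from funext hβ] at this
    exact this
  rw [h1, ← h2, h3]

theorem exists_equiv_of_fun (S : L.Substructure M) (S' : L.Substructure N) (F : S → N)
    (hinj : Function.Injective F) (hrange : Set.range F = (S' : Set N))
    (hfun : ∀ {l : ℕ} (f : L.Functions l) (c : Fin l → S),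
      Structure.funMap f (F ∘ c) = F (Structure.funMap f c))
    (hrel : ∀ {l : ℕ} (R : L.Relations l) (c : Fin l → S),
      Structure.RelMap R (F ∘ c) ↔ Structure.RelMap R (fun y => (c y : M))) :
    ∃ β : S ≃[L] S', ∀ x : S, (β x : N) = F x := by
  have hmem : ∀ x : S, F x ∈ S' := fun x => by
    rw [← SetLike.mem_coe, ← hrange]; exact Set.mem_range_self x
  have hbij : Function.Bijective (fun x : S => (⟨F x, hmem x⟩ : S')) := by
    constructor
    · intro a b hab
      exact hinj (congrArg Subtype.val hab)
    · rintro ⟨y, hy⟩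
      rw [← SetLike.mem_coe, ← hrange] at hy
      obtain ⟨x, hx⟩ := hy
      exact ⟨x, Subtype.ext hx⟩
  refine ⟨{ Equiv.ofBijective _ hbij with
      map_fun' := ?_
      map_rel' := ?_ }, fun x => rfl⟩
  · intro l f c
    apply Subtype.ext
    exact (hfun f c).symm
  · intro l R c
    exact hrel R c

theorem exists_realizing_term {k : ℕ} (v : Fin k → M) (x : M)
    (hx : x ∈ closure L (Set.range v)) :
    ∃ t : L.Term (Fin k), t.realize v = x := by
  obtain ⟨t, ht⟩ := mem_closure_iff_exists_term.1 hx
  have hg : ∀ y : Set.range v, ∃ a, v a = (y : M) := fun y => y.2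
  choose g hgspec using hg
  refine ⟨t.relabel g, ?_⟩
  rw [Term.realize_relabel, ← ht]
  exact congrFun (congrArg Term.realize (funext fun y => hgspec y)) t

theorem isQF_foldr_inf {α : Type*} {n : ℕ} :
    ∀ l : List (L.BoundedFormula α n), (∀ ψ ∈ l, ψ.IsQF) →
      (l.foldr (· ⊓ ·) ⊤).IsQF
  | [], _ => BoundedFormula.IsQF.top
  | ψ :: l, h =>
    (h ψ List.mem_cons_self).inf
      (isQF_foldr_inf l fun φ hφ => h φ (List.mem_cons_of_mem _ hφ))

/-- Conjunction over a finset (the old `BoundedFormula.iInf`). -/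
noncomputable def finsetInf {α β' : Type*} {n : ℕ} (s : Finset β')
    (f : β' → L.BoundedFormula α n) : L.BoundedFormula α n :=
  (s.toList.map f).foldr (· ⊓ ·) ⊤

theorem isQF_iInf {α β' : Type*} {n : ℕ} (s : Finset β') (f : β' → L.BoundedFormula α n)
    (h : ∀ b, (f b).IsQF) : (finsetInf s f).IsQF := by
  refine isQF_foldr_inf _ ?_
  simp only [List.mem_map]
  rintro ψ ⟨b, _, rfl⟩
  exact h b

theorem realize_iInf_formula {α β' : Type*} (s : Finset β') (f : β' → L.Formula α)
    (u : α → M) :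
    Formula.Realize (finsetInf s f) u ↔ ∀ b ∈ s, (f b).Realize u :=
  by
    unfold finsetInf Formula.Realize
    rw [BoundedFormula.realize_foldr_inf]
    simp only [List.mem_map, Finset.mem_toList]
    constructor
    · intro h b hb; exact h _ ⟨b, hb, rfl⟩
    · rintro h _ ⟨b, hb, rfl⟩; exact h b hb

theorem exists_definer [Finite (Σ n, L.Functions n)] [Finite (Σ n, L.Relations n)]
    {k : ℕ} (v : Fin k → M)
    (hfin : ((closure L (Set.range v) : L.Substructure M) : Set M).Finite) :
    ∃ α : L.Formula (Fin k), α.IsQF ∧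
      ∀ (N' : Type x) (_ : L.Structure N') (u : Fin k → N'),
        α.Realize u ↔ ∃ β : (closure L (Set.range v)) ≃[L] (closure L (Set.range u)),
          ∀ a : Fin k, (β ⟨v a, subset_closure (Set.mem_range_self a)⟩ : N') = u a := by
  classical
  set X := closure L (Set.range v) with hXdef
  haveI : Finite X := hfin.to_subtype
  haveI : Fintype X := Fintype.ofFinite X
  have htse : ∀ x : X, ∃ t : L.Term (Fin k), t.realize v = (x : M) := fun x =>
    exists_realizing_term v x x.2
  choose ts hts using htse
  set σ : Fin k → X := fun a => ⟨v a, subset_closure (Set.mem_range_self a)⟩ with hσdef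
  haveI : Fintype (Σ f : (Σ l, L.Functions l), (Fin f.1 → X)) := Fintype.ofFinite _
  haveI : Fintype (Σ R : (Σ l, L.Relations l), (Fin R.1 → X)) := Fintype.ofFinite _
  set A1 : L.Formula (Fin k) := finsetInf Finset.univ
      (fun p : X × X => if p.1 = p.2 then ⊤ else ((ts p.1).equal (ts p.2)).not) with hA1
  set A2 : L.Formula (Fin k) := finsetInf Finset.univ
      (fun a : Fin k => Term.equal (Term.var a) (ts (σ a))) with hA2
  set A3 : L.Formula (Fin k) := finsetInf Finset.univ
      (fun fc : (Σ f : (Σ l, L.Functions l), (Fin f.1 → X)) =>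
        Term.equal (Term.func fc.1.2 fun y => ts (fc.2 y))
          (ts (Structure.funMap fc.1.2 fc.2))) with hA3
  set A4 : L.Formula (Fin k) := finsetInf Finset.univ
      (fun Rc : (Σ R : (Σ l, L.Relations l), (Fin R.1 → X)) =>
        if Structure.RelMap Rc.1.2 (fun y => ((Rc.2 y : M))) then
          Relations.formula Rc.1.2 (fun y => ts (Rc.2 y))
        else (Relations.formula Rc.1.2 (fun y => ts (Rc.2 y))).not) with hA4
  have hqf : (A1 ⊓ A2 ⊓ A3 ⊓ A4).IsQF := by
    refine (((isQF_iInf _ _ ?_).inf (isQF_iInf _ _ ?_)).inf (isQF_iInf _ _ ?_)).inf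
      (isQF_iInf _ _ ?_)
    · intro p
      split_ifs
      · exact BoundedFormula.IsQF.top
      · exact (BoundedFormula.IsAtomic.equal _ _).isQF.not
    · intro a
      exact (BoundedFormula.IsAtomic.equal _ _).isQF
    · intro fc
      exact (BoundedFormula.IsAtomic.equal _ _).isQF
    · intro Rc
      split_ifs
      · exact (BoundedFormula.IsAtomic.rel _ _).isQF
      · exact (BoundedFormula.IsAtomic.rel _ _).isQF.not
  -- semantic reformulation of the four conjuncts
  have e1 : ∀ (N' : Type x) (_ : L.Structure N') (u : Fin k → N'),
      A1.Realize u ↔ ∀ p q : X, p ≠ q → (ts p).realize u ≠ (ts q).realize u := by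
    intro N' _ u
    rw [hA1, realize_iInf_formula]
    constructor
    · intro h p q hpq
      have h2 := h (p, q) (Finset.mem_univ _)
      rw [if_neg hpq] at h2
      simpa only [Formula.realize_not, Formula.realize_equal] using h2
    · rintro h ⟨p, q⟩ -
      by_cases hpq : p = q
      · rw [if_pos hpq]
        exact BoundedFormula.realize_top.2 trivial
      · rw [if_neg hpq]
        simpa only [Formula.realize_not, Formula.realize_equal] using h p q hpq
  have e2 : ∀ (N' : Type x) (_ : L.Structure N') (u : Fin k → N'),
      A2.Realize u ↔ ∀ a, u a = (ts (σ a)).realize u := by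
    intro N' _ u
    rw [hA2, realize_iInf_formula]
    simp only [Finset.mem_univ, forall_true_left, Formula.realize_equal, Term.realize_var]
  have e3 : ∀ (N' : Type x) (_ : L.Structure N') (u : Fin k → N'),
      A3.Realize u ↔ ∀ fc : (Σ f : (Σ l, L.Functions l), (Fin f.1 → X)),
        Structure.funMap fc.1.2 (fun y => (ts (fc.2 y)).realize u) =
          (ts (Structure.funMap fc.1.2 fc.2)).realize u := by
    intro N' _ u
    rw [hA3, realize_iInf_formula]
    simp only [Finset.mem_univ, forall_true_left, Formula.realize_equal, Term.realize_func]
  have e4 : ∀ (N' : Type x) (_ : L.Structure N') (u : Fin k → N'),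
      A4.Realize u ↔ ∀ Rc : (Σ R : (Σ l, L.Relations l), (Fin R.1 → X)),
        (Structure.RelMap Rc.1.2 (fun y => ((Rc.2 y : M))) ↔
          Structure.RelMap Rc.1.2 (fun y => (ts (Rc.2 y)).realize u)) := by
    intro N' _ u
    rw [hA4, realize_iInf_formula]
    constructor
    · intro h Rc
      have h2 := h Rc (Finset.mem_univ _)
      by_cases hR : Structure.RelMap Rc.1.2 (fun y => ((Rc.2 y : M)))
      · rw [if_pos hR] at h2
        rw [Formula.realize_rel] at h2
        exact iff_of_true hR h2
      · rw [if_neg hR] at h2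
        rw [Formula.realize_not, Formula.realize_rel] at h2
        exact iff_of_false hR h2
    · intro h Rc _
      by_cases hR : Structure.RelMap Rc.1.2 (fun y => ((Rc.2 y : M)))
      · rw [if_pos hR, Formula.realize_rel]
        exact (h Rc).1 hR
      · rw [if_neg hR, Formula.realize_not, Formula.realize_rel]
        exact fun hc => hR ((h Rc).2 hc)
  refine ⟨A1 ⊓ A2 ⊓ A3 ⊓ A4, hqf, ?_⟩
  intro N' iN' u
  constructor
  · intro hα
    rw [Formula.realize_inf, Formula.realize_inf, Formula.realize_inf] at hα
    obtain ⟨⟨⟨h1, h2⟩, h3⟩, h4⟩ := hα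
    rw [e1 N' iN' u] at h1
    rw [e2 N' iN' u] at h2
    rw [e3 N' iN' u] at h3
    rw [e4 N' iN' u] at h4
    set F : X → N' := fun p => (ts p).realize u with hF
    have hFinj : Function.Injective F := by
      intro p q hpq
      by_contra hne
      exact h1 p q hne hpq
    have hrange : Set.range F = ((closure L (Set.range u) : L.Substructure N') : Set N') := by
      apply Set.Subset.antisymm
      · rintro _ ⟨p, rfl⟩
        exact (ts p).realize_mem u fun a => subset_closure (Set.mem_range_self a)
      · have hclosed : ∀ {l : ℕ} (f : L.Functions l) (x : Fin l → N'),
            (∀ i, x i ∈ Set.range F) → Structure.funMap f x ∈ Set.range F := by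
          intro l f x hx
          choose c hc using hx
          have hxc : x = F ∘ c := funext fun i => (hc i).symm
          rw [hxc]
          exact ⟨Structure.funMap f c, (h3 ⟨⟨l, f⟩, c⟩).symm⟩
        have hle : closure L (Set.range u) ≤
            ({ carrier := Set.range F,
               fun_mem := fun {l} f x hx => hclosed f x hx } : L.Substructure N') := by
          rw [closure_le]
          intro y hy
          obtain ⟨a, rfl⟩ := hy
          exact ⟨σ a, (h2 a).symm⟩
        exact fun y hy => hle hy
    obtain ⟨β, hβ⟩ := exists_equiv_of_fun X (closure L (Set.range u)) F hFinj hrange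
      (fun {l} f c => h3 ⟨⟨l, f⟩, c⟩) (fun {l} R c => (h4 ⟨⟨l, R⟩, c⟩).symm)
    refine ⟨β, fun a => ?_⟩
    rw [show (⟨v a, subset_closure (Set.mem_range_self a)⟩ : X) = σ a from rfl, hβ (σ a)]
    exact (h2 a).symm
  · rintro ⟨β, hβ⟩
    have hv : Formula.Realize (A1 ⊓ A2 ⊓ A3 ⊓ A4) v := by
      rw [Formula.realize_inf, Formula.realize_inf, Formula.realize_inf]
      refine ⟨⟨⟨(e1 M ‹L.Structure M› v).2 ?_, (e2 M ‹L.Structure M› v).2 ?_⟩,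
        (e3 M ‹L.Structure M› v).2 ?_⟩, (e4 M ‹L.Structure M› v).2 ?_⟩
      · intro p q hpq hc
        rw [hts p, hts q] at hc
        exact hpq (Subtype.coe_injective hc)
      · intro a
        rw [hts (σ a)]
      · intro fc
        rw [hts (Structure.funMap fc.1.2 fc.2)]
        have : (fun y => (ts (fc.2 y)).realize v) = fun y => ((fc.2 y : M)) :=
          funext fun y => hts (fc.2 y)
        rw [this]
        rfl
      · intro Rc
        have : (fun y => (ts (Rc.2 y)).realize v) = fun y => ((Rc.2 y : M)) :=
          funext fun y => hts (Rc.2 y)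
        rw [this]
    exact (realize_iff_of_equiv hqf v u β hβ).1 hv

end QFH

/-- Over a finite language `L` and a uniformly locally finite class
`T = {T i}` of `L`-structures, every quantifier-free formula `φ` with free variables among
`x_1, …, x_k` is equivalent over the class to a finite disjunction of quantifier-free
formulas `α_1, …, α_m`, each of which defines a local-symmetry equivalence class realized
in the class: (i) each `α r` is quantifier-free and there are `i` and `v r : Fin k → T i`
such that for every member of the class and tuple `u` in it, `α r` is realized at `u` iff
there is a local isomorphism from `v r` to `u`; and (ii) `φ` is realized at a tuple `u`
of a member of the class iff some `α r` is realized at `u`. -/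
theorem qf_formula_equiv_disjunction_of_class_definers {L : Language}
    [Finite (Σ n, L.Functions n)] [Finite (Σ n, L.Relations n)]
    {ι : Type*} (T : ι → Type*) [∀ i, L.Structure (T i)]
    (hulf : ∀ d : ℕ, ∃ n : ℕ, ∀ (i : ι) (w : Fin d → T i),
      ((closure L (Set.range w) : L.Substructure (T i)) : Set (T i)).Finite ∧
        ((closure L (Set.range w) : L.Substructure (T i)) : Set (T i)).ncard ≤ n)
    {k : ℕ} (φ : L.Formula (Fin k)) (hφ : φ.IsQF) :
    ∃ (m : ℕ) (α : Fin m → L.Formula (Fin k)),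
      (∀ r : Fin m, (α r).IsQF ∧
        ∃ (i : ι) (v : Fin k → T i),
          ∀ (j : ι) (u : Fin k → T j),
            (α r).Realize u ↔
              ∃ β : (closure L (Set.range v)) ≃[L] (closure L (Set.range u)),
                ∀ a : Fin k,
                  (β ⟨v a, subset_closure (Set.mem_range_self a)⟩ : T j) = u a) ∧
      (∀ (j : ι) (u : Fin k → T j), φ.Realize u ↔ ∃ r : Fin m, (α r).Realize u) := by

  classical
  obtain ⟨n, hn⟩ := hulf k
  -- the definer formula for each pointed tuple
  have hdef : ∀ s : (Σ i : ι, Fin k → T i), ∃ α : L.Formula (Fin k), α.IsQF ∧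
      ∀ (j : ι) (u : Fin k → T j),
        α.Realize u ↔ ∃ β : (closure L (Set.range s.2)) ≃[L] (closure L (Set.range u)),
          ∀ a : Fin k, (β ⟨s.2 a, subset_closure (Set.mem_range_self a)⟩ : T j) = u a := by
    rintro ⟨i, v⟩
    obtain ⟨α, hqf, hα⟩ := QFH.exists_definer v (hn i v).1
    exact ⟨α, hqf, fun j u => hα (T j) inferInstance u⟩
  choose A hAqf hA using hdef
  -- injections into Fin (n+1)
  have hρ : ∀ s : (Σ i : ι, Fin k → T i),
      ∃ ρ : (closure L (Set.range s.2) : L.Substructure (T s.1)) → Fin (n + 1),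
        Function.Injective ρ := by
    intro s
    haveI : Finite (closure L (Set.range s.2) : L.Substructure (T s.1)) :=
      (hn s.1 s.2).1.to_subtype
    have hcard : Nat.card (closure L (Set.range s.2) : L.Substructure (T s.1)) ≤ n + 1 := by
      have h1 : Nat.card (closure L (Set.range s.2) : L.Substructure (T s.1)) =
          ((closure L (Set.range s.2) : L.Substructure (T s.1)) : Set (T s.1)).ncard :=
        Nat.card_coe_set_eq _
      rw [h1]
      exact le_trans (hn s.1 s.2).2 (Nat.le_succ n)
    exact ⟨fun y => Fin.castLE hcard ((Finite.equivFin _) y), fun a b hab =>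
      (Finite.equivFin _).injective (Fin.castLE_injective _ hab)⟩
  choose ρ hρinj using hρ
  set gen : ∀ s : (Σ i : ι, Fin k → T i),
      Fin k → (closure L (Set.range s.2) : L.Substructure (T s.1)) :=
    fun s a => ⟨s.2 a, subset_closure (Set.mem_range_self a)⟩ with hgen
  -- the finite code
  let Code : Type _ := (Fin k → Fin (n + 1)) × Set (Fin (n + 1)) ×
    ((f : Σ l, L.Functions l) → ((Fin f.1 → Fin (n + 1)) → Fin (n + 1))) ×
    ((R : Σ l, L.Relations l) → Set (Fin R.1 → Fin (n + 1)))
  haveI : Finite Code := by infer_instance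
  set code : (Σ i : ι, Fin k → T i) → Code := fun s =>
    (fun a => ρ s (gen s a),
     Set.range (ρ s),
     fun f c =>
       if h : ∃ d : Fin f.1 → (closure L (Set.range s.2) : L.Substructure (T s.1)),
           ∀ y, ρ s (d y) = c y then
         ρ s (Structure.funMap f.2 h.choose)
       else 0,
     fun R => {c | ∃ d : Fin R.1 → (closure L (Set.range s.2) : L.Substructure (T s.1)),
       (∀ y, ρ s (d y) = c y) ∧ Structure.RelMap R.2 (fun y => ((d y : T s.1)))}) with hcodedef
  -- equal codes give a local isomorphism
  have hcode : ∀ s t : (Σ i : ι, Fin k → T i), code s = code t →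
      ∃ β : (closure L (Set.range s.2)) ≃[L] (closure L (Set.range t.2)),
        ∀ a : Fin k, (β ⟨s.2 a, subset_closure (Set.mem_range_self a)⟩ : T t.1) = t.2 a := by
    intro s t hst
    have h1 : ∀ a, ρ s (gen s a) = ρ t (gen t a) := fun a =>
      congrFun (congrArg (fun c : Code => c.1) hst) a
    have h2 : Set.range (ρ s) = Set.range (ρ t) :=
      congrArg (fun c : Code => c.2.1) hst
    have h3 := congrArg (fun c : Code => c.2.2.1) hst
    have h4 := congrArg (fun c : Code => c.2.2.2) hst
    simp only [hcodedef] at h3 h4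
    have hg0 : ∀ x : (closure L (Set.range s.2) : L.Substructure (T s.1)),
        ∃ y : (closure L (Set.range t.2) : L.Substructure (T t.1)), ρ t y = ρ s x := by
      intro x
      have : ρ s x ∈ Set.range (ρ t) := h2 ▸ Set.mem_range_self x
      exact this
    choose g hg using hg0
    set F : (closure L (Set.range s.2) : L.Substructure (T s.1)) → T t.1 :=
      fun x => (g x : T t.1) with hF
    have hginj : Function.Injective g := by
      intro a b hab
      apply hρinj s
      rw [← hg a, ← hg b, hab]
    have hFinj : Function.Injective F :=
      fun a b hab => hginj (Subtype.coe_injective hab)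
    have hgsur : ∀ y : (closure L (Set.range t.2) : L.Substructure (T t.1)),
        ∃ x, g x = y := by
      intro y
      have : ρ t y ∈ Set.range (ρ s) := h2 ▸ Set.mem_range_self y
      obtain ⟨x, hx⟩ := this
      exact ⟨x, hρinj t (by rw [hg x, hx])⟩
    have hrange : Set.range F =
        ((closure L (Set.range t.2) : L.Substructure (T t.1)) : Set (T t.1)) := by
      apply Set.Subset.antisymm
      · rintro _ ⟨x, rfl⟩
        exact (g x).2
      · intro y hy
        obtain ⟨x, hx⟩ := hgsur ⟨y, hy⟩
        refine ⟨x, ?_⟩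
        show (g x : T t.1) = y
        rw [hx]
    have hfun : ∀ {l : ℕ} (f : L.Functions l)
        (c : Fin l → (closure L (Set.range s.2) : L.Substructure (T s.1))),
        Structure.funMap f (F ∘ c) = F (Structure.funMap f c) := by
      intro l f c
      have h3' := congrFun (congrFun h3 ⟨l, f⟩) (fun y => ρ s (c y))
      have hds : ∃ d : Fin l → (closure L (Set.range s.2) : L.Substructure (T s.1)),
          ∀ y, ρ s (d y) = ρ s (c y) := ⟨c, fun y => rfl⟩
      have hdt : ∃ d : Fin l → (closure L (Set.range t.2) : L.Substructure (T t.1)),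
          ∀ y, ρ t (d y) = ρ s (c y) := ⟨fun y => g (c y), fun y => hg (c y)⟩
      rw [dif_pos hds, dif_pos hdt] at h3'
      have hcs : hds.choose = c := funext fun y => hρinj s (hds.choose_spec y)
      have hct : hdt.choose = fun y => g (c y) := funext fun y => hρinj t
        ((hdt.choose_spec y).trans (hg (c y)).symm)
      rw [hcs, hct] at h3'
      have hgf : g (Structure.funMap f c) = Structure.funMap f (fun y => g (c y)) :=
        hρinj t (by rw [hg]; exact h3')
      show Structure.funMap f (fun y => (g (c y) : T t.1)) = (g (Structure.funMap f c) : T t.1)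
      rw [hgf]
      rfl
    have hrel : ∀ {l : ℕ} (R : L.Relations l)
        (c : Fin l → (closure L (Set.range s.2) : L.Substructure (T s.1))),
        Structure.RelMap R (F ∘ c) ↔ Structure.RelMap R (fun y => ((c y : T s.1))) := by
      intro l R c
      have hLs : (∃ d : Fin l → (closure L (Set.range s.2) : L.Substructure (T s.1)),
          (∀ y, ρ s (d y) = ρ s (c y)) ∧ Structure.RelMap R (fun y => ((d y : T s.1)))) ↔
          Structure.RelMap R (fun y => ((c y : T s.1))) := by
        constructor
        · rintro ⟨d, hd, hRd⟩
          have hdc : d = c := funext fun y => hρinj s (hd y)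
          rwa [hdc] at hRd
        · intro h
          exact ⟨c, fun y => rfl, h⟩
      have hRt : (∃ d : Fin l → (closure L (Set.range t.2) : L.Substructure (T t.1)),
          (∀ y, ρ t (d y) = ρ s (c y)) ∧ Structure.RelMap R (fun y => ((d y : T t.1)))) ↔
          Structure.RelMap R (F ∘ c) := by
        constructor
        · rintro ⟨d, hd, hRd⟩
          have hdc : d = fun y => g (c y) := funext fun y => hρinj t
            ((hd y).trans (hg (c y)).symm)
          rw [hdc] at hRd
          exact hRd
        · intro h
          exact ⟨fun y => g (c y), fun y => hg (c y), h⟩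
      have hiff : (∃ d : Fin l → (closure L (Set.range s.2) : L.Substructure (T s.1)),
          (∀ y, ρ s (d y) = ρ s (c y)) ∧ Structure.RelMap R (fun y => ((d y : T s.1)))) ↔
          (∃ d : Fin l → (closure L (Set.range t.2) : L.Substructure (T t.1)),
          (∀ y, ρ t (d y) = ρ s (c y)) ∧ Structure.RelMap R (fun y => ((d y : T t.1)))) := by
        have h4' := congrFun h4 ⟨l, R⟩
        exact Iff.of_eq (congrArg (fun S : Set (Fin l → Fin (n + 1)) =>
          (fun y => ρ s (c y)) ∈ S) h4')
      exact hRt.symm.trans (hiff.symm.trans hLs)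
    obtain ⟨β, hβ⟩ := QFH.exists_equiv_of_fun
      (closure L (Set.range s.2)) (closure L (Set.range t.2)) F hFinj hrange
      (fun {l} f c => hfun f c) (fun {l} R c => hrel R c)
    refine ⟨β, fun a => ?_⟩
    rw [show (⟨s.2 a, subset_closure (Set.mem_range_self a)⟩ :
        (closure L (Set.range s.2) : L.Substructure (T s.1))) = gen s a from rfl]
    rw [hβ (gen s a)]
    have : g (gen s a) = gen t a := hρinj t (by rw [hg, h1])
    show (g (gen s a) : T t.1) = t.2 a
    rw [this]
  -- assemble
  set Sel : Set Code := code '' {s : (Σ i : ι, Fin k → T i) | φ.Realize s.2} with hSel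
  haveI : Fintype Sel := Fintype.ofFinite _
  have hrepex : ∀ c : Sel, ∃ s : (Σ i : ι, Fin k → T i), φ.Realize s.2 ∧ code s = (c : Code) := by
    rintro ⟨c, hc⟩
    obtain ⟨s, hs, rfl⟩ := hc
    exact ⟨s, hs, rfl⟩
  choose rep hrepφ hrepc using hrepex
  refine ⟨Fintype.card Sel, fun r => A (rep ((Fintype.equivFin Sel).symm r)), fun r => ?_, ?_⟩
  · exact ⟨hAqf _, (rep ((Fintype.equivFin Sel).symm r)).1,
      (rep ((Fintype.equivFin Sel).symm r)).2, hA _⟩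
  · intro j u
    constructor
    · intro hu
      have hmem : code ⟨j, u⟩ ∈ Sel := ⟨⟨j, u⟩, hu, rfl⟩
      refine ⟨(Fintype.equivFin Sel) ⟨code ⟨j, u⟩, hmem⟩, ?_⟩
      refine (hA _ j u).2 ?_
      refine hcode _ ⟨j, u⟩ ?_
      rw [hrepc]
      exact congrArg Subtype.val (Equiv.symm_apply_apply _ _)
    · rintro ⟨r, hr⟩
      obtain ⟨β, hβ⟩ := (hA _ j u).1 hr
      exact (QFH.realize_iff_of_equiv hφ _ u β hβ).1 (hrepφ _)
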